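/- Let M and M̂ be d×d stochastic matrices, 0 < α < 1, g ∈ R^d, and define V = (I - αM)^{-1}g and V̂ = (I - αM̂)^{-1}g. Then ||V - V̂||_∞ ≤ (α/(1-α)²)·sqrt(d)·||M̂ - M||_∞·||g||_1, where ||M̂ - M||_∞ denotes the maximum absolute row-sum matrix norm. -/

import Mathlib

open Matrix

noncomputable def matInfNorm' {d : ℕ} (A : Matrix (Fin d) (Fin d) ℝ) : ℝ :=
  ⨆ i : Fin d, ∑ j : Fin d, |A i j|

lemma mulVec_expand {d : ℕ} (α : ℝ) (P : Matrix (Fin d) (Fin d) ℝ) (x : Fin d → ℝ)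
    (i : Fin d) :
    (((1 : Matrix (Fin d) (Fin d) ℝ) - α • P) *ᵥ x) i = x i - α * ∑ j, P i j * x j := by
  rw [Matrix.sub_mulVec, Matrix.smul_mulVec]
  simp [Matrix.one_mulVec, Matrix.mulVec, dotProduct, Finset.mul_sum]

/-- If every `|x i| ≤ a * sup + c` with `a < 1`, then `sup ≤ c/(1-a)`. -/
lemma sup_abs_le {d : ℕ} [Nonempty (Fin d)] (x : Fin d → ℝ) (a c : ℝ) (ha : a < 1)
    (h : ∀ i, |x i| ≤ a * (⨆ j, |x j|) + c) :
    (⨆ i, |x i|) ≤ c / (1 - a) := by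
  have h1 : (0:ℝ) < 1 - a := by linarith
  have hS : (⨆ i, |x i|) ≤ a * (⨆ j, |x j|) + c := ciSup_le h
  rw [le_div_iff₀ h1]
  nlinarith [hS]

lemma stoch_unit {d : ℕ} (M : Matrix (Fin d) (Fin d) ℝ)
    (hMnn : ∀ i j, 0 ≤ M i j) (hMrow : ∀ i, ∑ j, M i j = 1)
    (α : ℝ) (hα0 : 0 < α) (hα1 : α < 1) :
    IsUnit ((1 : Matrix (Fin d) (Fin d) ℝ) - α • M).det := by
  rw [isUnit_iff_ne_zero]
  intro hdet
  obtain ⟨v, hv, hv0⟩ := Matrix.exists_mulVec_eq_zero_iff.2 hdet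
  obtain ⟨i0, hi0⟩ : ∃ i, v i ≠ 0 := Function.ne_iff.1 hv
  haveI : Nonempty (Fin d) := ⟨i0⟩
  obtain ⟨m, hm⟩ := Finite.exists_max fun i => |v i|
  have hvm : 0 < |v m| := lt_of_lt_of_le (abs_pos.2 hi0) (hm i0)
  have hveq : v m = α * ∑ j, M m j * v j := by
    have h := congrFun hv0 m
    rw [mulVec_expand] at h
    simpa [sub_eq_zero] using h
  have hle : |v m| ≤ α * |v m| := by
    calc |v m| = |α * ∑ j, M m j * v j| := by rw [← hveq]
    _ = α * |∑ j, M m j * v j| := by rw [abs_mul, abs_of_pos hα0]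
    _ ≤ α * ∑ j, |M m j * v j| :=
        mul_le_mul_of_nonneg_left (Finset.abs_sum_le_sum_abs _ _) hα0.le
    _ ≤ α * ∑ j, M m j * |v m| := by
        apply mul_le_mul_of_nonneg_left _ hα0.le
        apply Finset.sum_le_sum
        intro j _
        rw [abs_mul, abs_of_nonneg (hMnn m j)]
        exact mul_le_mul_of_nonneg_left (hm j) (hMnn m j)
    _ = α * |v m| := by rw [← Finset.sum_mul, hMrow m, one_mul]
  nlinarith

theorem stmt18 {d : ℕ} (M Mhat : Matrix (Fin d) (Fin d) ℝ)
    (hMnn : ∀ i j, 0 ≤ M i j) (hMrow : ∀ i, ∑ j, M i j = 1)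
    (hMhnn : ∀ i j, 0 ≤ Mhat i j) (hMhrow : ∀ i, ∑ j, Mhat i j = 1)
    (α : ℝ) (hα0 : 0 < α) (hα1 : α < 1) (g : Fin d → ℝ)
    (V Vhat : Fin d → ℝ)
    (hV : V = ((1 : Matrix (Fin d) (Fin d) ℝ) - α • M)⁻¹ *ᵥ g)
    (hVhat : Vhat = ((1 : Matrix (Fin d) (Fin d) ℝ) - α • Mhat)⁻¹ *ᵥ g) :
    (⨆ i : Fin d, |V i - Vhat i|)
      ≤ (α / (1 - α) ^ 2) * Real.sqrt d * matInfNorm' (Mhat - M) * ∑ j, |g j| := by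
  rcases Nat.eq_zero_or_pos d with hd | hd
  · subst hd
    rw [Real.iSup_of_isEmpty]
    simp
  haveI : Nonempty (Fin d) := ⟨⟨0, hd⟩⟩
  have h1α : (0:ℝ) < 1 - α := by linarith
  have hA := stoch_unit M hMnn hMrow α hα0 hα1
  have hB := stoch_unit Mhat hMhnn hMhrow α hα0 hα1
  have hAV : ((1 : Matrix (Fin d) (Fin d) ℝ) - α • M) *ᵥ V = g := by
    rw [hV, Matrix.mulVec_mulVec, Matrix.mul_nonsing_inv _ hA, Matrix.one_mulVec]
  have hBV : ((1 : Matrix (Fin d) (Fin d) ℝ) - α • Mhat) *ᵥ Vhat = g := by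
    rw [hVhat, Matrix.mulVec_mulVec, Matrix.mul_nonsing_inv _ hB, Matrix.one_mulVec]
  have hVeq : ∀ i, V i = α * (∑ j, M i j * V j) + g i := by
    intro i
    have h := congrFun hAV i
    rw [mulVec_expand] at h
    linarith
  have hVheq : ∀ i, Vhat i = α * (∑ j, Mhat i j * Vhat j) + g i := by
    intro i
    have h := congrFun hBV i
    rw [mulVec_expand] at h
    linarith
  set G := ∑ j, |g j| with hGdef
  set N := matInfNorm' (Mhat - M) with hNdef
  set T := ⨆ j, |Vhat j| with hTdef
  have hGnn : 0 ≤ G := Finset.sum_nonneg fun j _ => abs_nonneg _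
  have hbddVh : BddAbove (Set.range fun j => |Vhat j|) := (Set.finite_range _).bddAbove
  have hbddN : BddAbove (Set.range fun i => ∑ j, |(Mhat - M) i j|) :=
    (Set.finite_range _).bddAbove
  have hTnn : 0 ≤ T :=
    le_trans (abs_nonneg _) (le_ciSup hbddVh (Classical.arbitrary (Fin d)))
  have hrowN : ∀ i, ∑ j, |Mhat i j - M i j| ≤ N := by
    intro i
    have := le_ciSup hbddN i
    simpa [hNdef, matInfNorm', Matrix.sub_apply] using this
  have hNnn : 0 ≤ N :=
    le_trans (Finset.sum_nonneg fun j _ => abs_nonneg _)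
      (hrowN (Classical.arbitrary (Fin d)))
  have hgG : ∀ i, |g i| ≤ G := fun i =>
    Finset.single_le_sum (f := fun j => |g j|) (fun j _ => abs_nonneg _)
      (Finset.mem_univ i)
  -- Bound T ≤ G / (1 - α)
  have hT : T ≤ G / (1 - α) := by
    apply sup_abs_le Vhat α G hα1
    intro i
    calc |Vhat i| = |α * (∑ j, Mhat i j * Vhat j) + g i| := by rw [← hVheq i]
    _ ≤ |α * (∑ j, Mhat i j * Vhat j)| + |g i| := abs_add_le _ _
    _ = α * |∑ j, Mhat i j * Vhat j| + |g i| := by rw [abs_mul, abs_of_pos hα0]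
    _ ≤ α * (∑ j, Mhat i j * T) + G := by
        refine add_le_add (mul_le_mul_of_nonneg_left ?_ hα0.le) (hgG i)
        refine le_trans (Finset.abs_sum_le_sum_abs _ _) (Finset.sum_le_sum ?_)
        intro j _
        rw [abs_mul, abs_of_nonneg (hMhnn i j)]
        exact mul_le_mul_of_nonneg_left (le_ciSup hbddVh j) (hMhnn i j)
    _ = α * T + G := by rw [← Finset.sum_mul, hMhrow i, one_mul]
  -- Bound S ≤ α N T / (1 - α)
  have hbddS : BddAbove (Set.range fun j => |V j - Vhat j|) := (Set.finite_range _).bddAbove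
  have hS : (⨆ i, |V i - Vhat i|) ≤ (α * (N * T)) / (1 - α) := by
    apply sup_abs_le (fun i => V i - Vhat i) α (α * (N * T)) hα1
    intro i
    have hsplit : V i - Vhat i
        = α * ((∑ j, M i j * (V j - Vhat j)) + ∑ j, (M i j - Mhat i j) * Vhat j) := by
      have hsum : (∑ j, M i j * (V j - Vhat j)) + ∑ j, (M i j - Mhat i j) * Vhat j
          = (∑ j, M i j * V j) - ∑ j, Mhat i j * Vhat j := by
        rw [← Finset.sum_add_distrib, ← Finset.sum_sub_distrib]
        exact Finset.sum_congr rfl fun j _ => by ring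
      rw [hsum, hVeq i, hVheq i]
      ring
    have hterm1 : |∑ j, M i j * (V j - Vhat j)| ≤ ⨆ j, |V j - Vhat j| := by
      calc |∑ j, M i j * (V j - Vhat j)|
          ≤ ∑ j, |M i j * (V j - Vhat j)| := Finset.abs_sum_le_sum_abs _ _
      _ ≤ ∑ j, M i j * (⨆ j, |V j - Vhat j|) := by
          refine Finset.sum_le_sum fun j _ => ?_
          rw [abs_mul, abs_of_nonneg (hMnn i j)]
          exact mul_le_mul_of_nonneg_left (le_ciSup hbddS j) (hMnn i j)
      _ = ⨆ j, |V j - Vhat j| := by rw [← Finset.sum_mul, hMrow i, one_mul]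
    have hterm2 : |∑ j, (M i j - Mhat i j) * Vhat j| ≤ N * T := by
      calc |∑ j, (M i j - Mhat i j) * Vhat j|
          ≤ ∑ j, |(M i j - Mhat i j) * Vhat j| := Finset.abs_sum_le_sum_abs _ _
      _ ≤ ∑ j, |Mhat i j - M i j| * T := by
          refine Finset.sum_le_sum fun j _ => ?_
          rw [abs_mul, abs_sub_comm]
          exact mul_le_mul_of_nonneg_left (le_ciSup hbddVh j) (abs_nonneg _)
      _ = (∑ j, |Mhat i j - M i j|) * T := by rw [Finset.sum_mul]
      _ ≤ N * T := mul_le_mul_of_nonneg_right (hrowN i) hTnn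
    calc |V i - Vhat i|
        = α * |(∑ j, M i j * (V j - Vhat j)) + ∑ j, (M i j - Mhat i j) * Vhat j| := by
          rw [hsplit, abs_mul, abs_of_pos hα0]
    _ ≤ α * (|∑ j, M i j * (V j - Vhat j)| + |∑ j, (M i j - Mhat i j) * Vhat j|) :=
          mul_le_mul_of_nonneg_left (abs_add_le _ _) hα0.le
    _ ≤ α * ((⨆ j, |V j - Vhat j|) + N * T) :=
          mul_le_mul_of_nonneg_left (add_le_add hterm1 hterm2) hα0.le
    _ = α * (⨆ j, |V j - Vhat j|) + α * (N * T) := by ring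
  -- Combine
  have hfinal : (⨆ i, |V i - Vhat i|) ≤ (α / (1 - α) ^ 2) * N * G := by
    refine le_trans hS ?_
    have hNT : α * (N * T) ≤ α * (N * (G / (1 - α))) :=
      mul_le_mul_of_nonneg_left (mul_le_mul_of_nonneg_left hT hNnn) hα0.le
    have hstep : α * (N * T) / (1 - α) ≤ α * (N * (G / (1 - α))) / (1 - α) := by
      gcongr
    refine hstep.trans_eq ?_
    field_simp
  refine le_trans hfinal ?_
  have hsqrt : (1:ℝ) ≤ Real.sqrt d := by
    rw [show (1:ℝ) = Real.sqrt 1 by simp]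
    apply Real.sqrt_le_sqrt
    exact_mod_cast hd
  have hcoef : 0 ≤ α / (1 - α) ^ 2 := by positivity
  nlinarith [mul_nonneg (mul_nonneg hcoef hNnn) hGnn]
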